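/- Fix an integer r ≥ 3 and let t = exp(πi/(2r)). Let H = ℂ^{r-1} with standard basis e_1, …, e_{r-1}. Let ε : ℤ → H be the unique function that is odd (ε(-k) = -ε(k) for all k), 2r-periodic (ε(k+2r) = ε(k) for all k), satisfies ε(0) = 0 and ε(k) = e_k for 1 ≤ k ≤ r-1. For integers p, q let C(p,q) : H → H be the unique ℂ-linear map with C(p,q)e_k = t^{-pq}*(t^{2qk} ε(k-p) + t^{-2qk} ε(k+p)) for 1 ≤ k ≤ r-1. Then for all integers m, n, p, q: C(m,n) ∘ C(p,q) = t^{mq-np}·C(m+p,n+q) + t^{-(mq-np)}·C(m-p,n-q). -/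

import Mathlib

/-- Product-to-sum formula for the quantized observables `C(p,q)` on the Hilbert
space `H = ℂ^{r-1}` of the quantization of the moduli space of flat
`SU(2)`-connections on the torus, at level `r` with `t = exp(πi/(2r))`.
Here `ε` is the odd `2r`-periodic extension of the standard basis to all
integer labels and `C(p,q)` is determined on the basis by
`C(p,q) e_k = t^{-pq}(t^{2qk} ε(k-p) + t^{-2qk} ε(k+p))`. -/
theorem stmt4 (r : ℕ) (hr : 3 ≤ r) (t : ℂ)
    (ht : t = Complex.exp (Real.pi * Complex.I / (2 * r)))
    (ε : ℤ → (Fin (r - 1) → ℂ))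
    (hodd : ∀ k : ℤ, ε (-k) = -ε k)
    (hper : ∀ k : ℤ, ε (k + 2 * r) = ε k)
    (hzero : ε 0 = 0)
    (hbasis : ∀ k : ℤ, 1 ≤ k → k ≤ (r : ℤ) - 1 →
      ε k = fun j : Fin (r - 1) => if ((j : ℕ) : ℤ) + 1 = k then 1 else 0)
    (C : ℤ → ℤ → ((Fin (r - 1) → ℂ) →ₗ[ℂ] (Fin (r - 1) → ℂ)))
    (hC : ∀ p q k : ℤ, 1 ≤ k → k ≤ (r : ℤ) - 1 →
      C p q (ε k) = t ^ (-(p * q)) •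
        (t ^ (2 * q * k) • ε (k - p) + t ^ (-(2 * q * k)) • ε (k + p))) :
    ∀ m n p q : ℤ,
      C m n ∘ₗ C p q =
        t ^ (m * q - n * p) • C (m + p) (n + q) +
        t ^ (-(m * q - n * p)) • C (m - p) (n - q) := by
  have ht0 : t ≠ 0 := by rw [ht]; exact Complex.exp_ne_zero _
  have hrC : (2 * (r : ℂ)) ≠ 0 := by
    have : (r : ℂ) ≠ 0 := Nat.cast_ne_zero.mpr (by omega)
    simpa using this
  have ht2r : t ^ (2 * (r : ℤ)) = -1 := by
    rw [ht, ← Complex.exp_int_mul]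
    rw [show ((2 * (r:ℤ) : ℤ) : ℂ) * (Real.pi * Complex.I / (2 * r)) = Real.pi * Complex.I from by
      push_cast; field_simp; exact div_self (Nat.cast_ne_zero.mpr (by omega))]
    exact Complex.exp_pi_mul_I
  have ht4 : ∀ d : ℤ, t ^ (4 * (r : ℤ) * d) = 1 := by
    intro d
    rw [show (4 * (r:ℤ) * d) = (2 * (r:ℤ)) * (2 * d) from by ring, zpow_mul, ht2r,
      show ((2:ℤ) * d) = 2 * d from rfl]
    rw [zpow_mul]
    norm_num
  have htshift : ∀ a d : ℤ, t ^ (a + 4 * (r : ℤ) * d) = t ^ a := by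
    intro a d; rw [zpow_add₀ ht0, ht4, mul_one]
  -- integer-indexed periodicity
  have hperN : ∀ (d : ℕ) (k : ℤ), ε (k + 2 * (r:ℤ) * d) = ε k := by
    intro d
    induction d with
    | zero => intro k; simp
    | succ i ih =>
      intro k
      rw [show (((i+1 : ℕ)):ℤ) = (i:ℤ) + 1 from by push_cast; ring,
        show k + 2 * (r:ℤ) * ((i:ℤ) + 1) = (k + 2 * (r:ℤ) * i) + 2 * r from by ring, hper, ih]
  have hperZ : ∀ (k d : ℤ), ε (k + 2 * (r:ℤ) * d) = ε k := by
    intro k d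
    obtain ⟨m, rfl | rfl⟩ := Int.eq_nat_or_neg d
    · exact hperN m k
    · have := hperN m (k + 2 * (r:ℤ) * (-(m:ℤ)))
      rw [show (k + 2 * (r:ℤ) * (-(m:ℤ)) + 2 * (r:ℤ) * (m:ℕ)) = k from by push_cast; ring] at this
      exact this.symm
  have hεR : ε (r : ℤ) = 0 := by
    have h1 : ε (r:ℤ) = -ε (r:ℤ) :=
      calc ε (r:ℤ) = ε (-(r:ℤ) + 2 * (r:ℤ) * 1) := congrArg ε (by ring)
        _ = ε (-(r:ℤ)) := hperZ _ _
        _ = -ε (r:ℤ) := hodd _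
    have h2 : (2:ℂ) • ε (r:ℤ) = 0 := by
      rw [two_smul]; nth_rewrite 2 [h1]; simp
    exact (smul_eq_zero.mp h2).resolve_left (by norm_num)
  -- the extension of hC to all integers k
  have hC' : ∀ p q k : ℤ, C p q (ε k) = t ^ (-(p * q)) •
      (t ^ (2 * q * k) • ε (k - p) + t ^ (-(2 * q * k)) • ε (k + p)) := by
    have main : ∀ p q k : ℤ, 0 ≤ k → k < 2 * (r:ℤ) → C p q (ε k) = t ^ (-(p * q)) •
        (t ^ (2 * q * k) • ε (k - p) + t ^ (-(2 * q * k)) • ε (k + p)) := by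
      intro p q k hk0 hk2
      rcases eq_or_ne k 0 with rfl | hkne
      · have e1 : ε (0 - p) = -ε p := by rw [show (0 - p : ℤ) = -p from by ring, hodd]
        rw [hzero, map_zero, e1, show ((0:ℤ) + p) = p from by ring, mul_zero]
        simp
      · rcases le_or_gt k ((r:ℤ) - 1) with hle | hgt
        · exact hC p q k (by omega) hle
        · rcases eq_or_ne k (r:ℤ) with rfl | hkr
          · have hRp : ε ((r:ℤ) + p) = -ε ((r:ℤ) - p) :=
              calc ε ((r:ℤ) + p) = ε (-((r:ℤ) - p) + 2 * (r:ℤ) * 1) := congrArg ε (by ring)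
                _ = ε (-((r:ℤ) - p)) := hperZ _ _
                _ = -ε ((r:ℤ) - p) := hodd _
            have hteq : t ^ (-(2 * q * (r:ℤ))) = t ^ (2 * q * (r:ℤ)) := by
              rw [show -(2 * q * (r:ℤ)) = 2 * q * (r:ℤ) + 4 * (r:ℤ) * (-q) from by ring, htshift]
            rw [hεR, map_zero, hRp, hteq]
            simp
          · -- r < k < 2r
            have hk2' : 1 ≤ 2 * (r:ℤ) - k ∧ 2 * (r:ℤ) - k ≤ (r:ℤ) - 1 := by omega
            have hεk : ε k = -ε (2 * (r:ℤ) - k) :=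
              calc ε k = ε (-(2 * (r:ℤ) - k) + 2 * (r:ℤ) * 1) := congrArg ε (by ring)
                _ = ε (-(2 * (r:ℤ) - k)) := hperZ _ _
                _ = -ε (2 * (r:ℤ) - k) := hodd _
            have e1 : ε (2 * (r:ℤ) - k - p) = -ε (k + p) :=
              calc ε (2 * (r:ℤ) - k - p) = ε (-(k + p) + 2 * (r:ℤ) * 1) := congrArg ε (by ring)
                _ = ε (-(k + p)) := hperZ _ _
                _ = -ε (k + p) := hodd _
            have e2 : ε (2 * (r:ℤ) - k + p) = -ε (k - p) :=
              calc ε (2 * (r:ℤ) - k + p) = ε (-(k - p) + 2 * (r:ℤ) * 1) := congrArg ε (by ring)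
                _ = ε (-(k - p)) := hperZ _ _
                _ = -ε (k - p) := hodd _
            have e3 : t ^ (2 * q * (2 * (r:ℤ) - k)) = t ^ (-(2 * q * k)) := by
              rw [show 2 * q * (2 * (r:ℤ) - k) = -(2 * q * k) + 4 * (r:ℤ) * q from by ring, htshift]
            have e4 : t ^ (-(2 * q * (2 * (r:ℤ) - k))) = t ^ (2 * q * k) := by
              rw [show -(2 * q * (2 * (r:ℤ) - k)) = 2 * q * k + 4 * (r:ℤ) * (-q) from by ring, htshift]
            rw [hεk, map_neg, hC p q _ hk2'.1 hk2'.2, e1, e2, e3, e4]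
            module
    intro p q k
    obtain ⟨d, k', hk'0, hk'lt, rfl⟩ : ∃ d k', 0 ≤ k' ∧ k' < 2 * (r:ℤ) ∧ k = k' + 2 * (r:ℤ) * d := by
      refine ⟨k / (2 * (r:ℤ)), k % (2 * (r:ℤ)), Int.emod_nonneg _ (by omega),
        Int.emod_lt_of_pos _ (by omega), ?_⟩
      exact (Int.emod_add_mul_ediv k (2 * (r:ℤ))).symm
    have e1 : ε (k' + 2 * (r:ℤ) * d - p) = ε (k' - p) := by
      rw [show k' + 2 * (r:ℤ) * d - p = (k' - p) + 2 * (r:ℤ) * d from by ring, hperZ]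
    have e2 : ε (k' + 2 * (r:ℤ) * d + p) = ε (k' + p) := by
      rw [show k' + 2 * (r:ℤ) * d + p = (k' + p) + 2 * (r:ℤ) * d from by ring, hperZ]
    have e3 : t ^ (2 * q * (k' + 2 * (r:ℤ) * d)) = t ^ (2 * q * k') := by
      rw [show 2 * q * (k' + 2 * (r:ℤ) * d) = 2 * q * k' + 4 * (r:ℤ) * (q * d) from by ring, htshift]
    have e4 : t ^ (-(2 * q * (k' + 2 * (r:ℤ) * d))) = t ^ (-(2 * q * k')) := by
      rw [show -(2 * q * (k' + 2 * (r:ℤ) * d)) = -(2 * q * k') + 4 * (r:ℤ) * (-(q * d)) from by ring, htshift]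
    rw [hperZ k' d, e1, e2, e3, e4]
    exact main p q k' hk'0 hk'lt
  -- cleaned-up form
  have hC'' : ∀ p q k : ℤ, C p q (ε k) =
      t ^ (2 * q * k - p * q) • ε (k - p) + t ^ (-(2 * q * k) - p * q) • ε (k + p) := by
    intro p q k
    rw [hC' p q k, smul_add, smul_smul, smul_smul, ← zpow_add₀ ht0, ← zpow_add₀ ht0,
      show -(p * q) + 2 * q * k = 2 * q * k - p * q from by ring,
      show -(p * q) + -(2 * q * k) = -(2 * q * k) - p * q from by ring]
  intro m n p q
  have final : ∀ k : ℤ, C m n (C p q (ε k)) =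
      t ^ (m * q - n * p) • (C (m + p) (n + q) (ε k)) +
      t ^ (-(m * q - n * p)) • (C (m - p) (n - q) (ε k)) := by
    intro k
    rw [hC'' p q k, map_add, map_smul, map_smul, hC'' m n (k - p), hC'' m n (k + p),
      hC'' (m + p) (n + q) k, hC'' (m - p) (n - q) k,
      show k - p - m = k - (m + p) from by ring,
      show k - p + m = k + (m - p) from by ring,
      show k + p - m = k - (m - p) from by ring,
      show k + p + m = k + (m + p) from by ring]
    match_scalars <;>
      · simp only [mul_one, mul_zero, add_zero, zero_add, zero_mul, one_mul, ← zpow_add₀ ht0]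
        congr 1
        ring
  apply Module.Basis.ext (Pi.basisFun ℂ (Fin (r - 1)))
  intro j
  have hbj : (Pi.basisFun ℂ (Fin (r - 1))) j = ε (((j : ℕ) : ℤ) + 1) := by
    rw [hbasis (((j : ℕ) : ℤ) + 1) (by omega) (by have := j.isLt; omega)]
    funext i
    simp only [Pi.basisFun_apply, Pi.single_apply]
    by_cases h : i = j
    · simp [h]
    · have h' : ¬ (((i : ℕ) : ℤ) + 1 = ((j : ℕ) : ℤ) + 1) := by
        simp only [add_left_inj, Int.natCast_inj]
        exact fun hc => h (Fin.ext hc)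
      simp [h, h', fun hc => h (Fin.ext hc)]
  rw [hbj]
  simp only [LinearMap.comp_apply, LinearMap.add_apply, LinearMap.smul_apply]
  exact final _
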